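/- arXiv:1104.0609 — 6 statements merged into one kernel-verified Lean document; each statement's English description precedes it below -/
import Mathlib

section
/- For a prime p ≡ 3 (mod 8), the diophantine equation x² - p·y² = -2 has an integer solution. -/
lemma no_two (p : ℕ) (hp8 : p % 8 = 3) (a b : ℤ) : a ^ 2 - (p : ℤ) * b ^ 2 ≠ 2 := by
  intro hab
  have key : ∀ a b : ZMod 8, a ^ 2 - 3 * b ^ 2 ≠ 2 := by decide
  have hcast : ((a : ZMod 8)) ^ 2 - (p : ZMod 8) * (b : ZMod 8) ^ 2 = 2 := by
    have := congrArg (Int.cast : ℤ → ZMod 8) hab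
    push_cast at this
    exact_mod_cast this
  have hpc : ((p : ℕ) : ZMod 8) = 3 := by
    rw [← ZMod.natCast_mod, hp8]; rfl
  rw [hpc] at hcast
  exact key _ _ hcast

lemma no_neg_one (p : ℕ) (hp8 : p % 8 = 3) (a b : ℤ) : a ^ 2 - (p : ℤ) * b ^ 2 ≠ -1 := by
  intro hab
  have key : ∀ a b : ZMod 4, a ^ 2 - 3 * b ^ 2 ≠ -1 := by decide
  have hcast : ((a : ZMod 4)) ^ 2 - (p : ZMod 4) * (b : ZMod 4) ^ 2 = -1 := by
    have := congrArg (Int.cast : ℤ → ZMod 4) hab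
    push_cast at this
    exact_mod_cast this
  have hpc : ((p : ℕ) : ZMod 4) = 3 := by
    have h4 : p % 4 = 3 := by omega
    rw [← ZMod.natCast_mod, h4]; rfl
  rw [hpc] at hcast
  exact key _ _ hcast

theorem pell_neg_two_solvable (p : ℕ) (hp : p.Prime) (h : p % 8 = 3) :
    ∃ x y : ℤ, x ^ 2 - (p : ℤ) * y ^ 2 = -2 := by
  have hpz : Prime ((p : ℤ)) := Nat.prime_iff_prime_int.mp hp
  have hd0 : (0 : ℤ) < (p : ℤ) := by exact_mod_cast hp.pos
  have hns : ¬ IsSquare ((p : ℤ)) := hpz.not_isSquare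
  obtain ⟨a, hfund⟩ := Pell.IsFundamental.exists_of_not_isSquare hd0 hns
  set u := a.x with hu
  set v := a.y with hv
  have hu1 : 1 < u := hfund.1
  have heq : u ^ 2 - (p : ℤ) * v ^ 2 = 1 := a.prop
  rcases Int.even_or_odd u with hue | huo
  · -- u even
    obtain ⟨k, hk⟩ := hue
    have hcop : IsCoprime (u - 1) (u + 1) := ⟨-k - 1, k, by rw [hk]; ring⟩
    have hdvd : (p : ℤ) ∣ (u - 1) * (u + 1) := ⟨v ^ 2, by linear_combination heq⟩
    rcases hpz.dvd_mul.mp hdvd with hd1 | hd2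
    · -- p ∣ u - 1 : leads to a² - p b² = 2, impossible
      obtain ⟨c, hc⟩ := hd1
      have hkey : (u + 1) * c = v ^ 2 := by
        have h4 : (p : ℤ) * ((u + 1) * c) = (p : ℤ) * v ^ 2 := by
          linear_combination (-(u + 1)) * hc + heq
        exact mul_left_cancel₀ hpz.ne_zero h4
      have hcop2 : IsCoprime (u + 1) c :=
        hcop.symm.of_isCoprime_of_dvd_right ⟨p, by rw [hc]; ring⟩
      obtain ⟨a0, ha0⟩ := Int.sq_of_isCoprime hcop2 hkey
      obtain ⟨b0, hb0⟩ := Int.sq_of_isCoprime hcop2.symm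
        (show c * (u + 1) = v ^ 2 by linear_combination hkey)
      have ha0' : u + 1 = a0 ^ 2 := by
        rcases ha0 with h' | h'
        · exact h'
        · exfalso; linarith [sq_nonneg a0]
      have hc0 : 0 < c := by
        rcases mul_pos_iff.mp (show (0:ℤ) < (p:ℤ) * c by linarith) with ⟨_, h'⟩ | ⟨h', _⟩
        · exact h'
        · linarith
      have hb0' : c = b0 ^ 2 := by
        rcases hb0 with h' | h'
        · exact h'
        · exfalso; linarith [sq_nonneg b0]
      exact absurd
        (show a0 ^ 2 - (p : ℤ) * b0 ^ 2 = 2 by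
          linear_combination -ha0' + hc + (p : ℤ) * hb0')
        (no_two p h a0 b0)
    · -- p ∣ u + 1 : gives a² - p b² = -2
      obtain ⟨c, hc⟩ := hd2
      have hkey : (u - 1) * c = v ^ 2 := by
        have h4 : (p : ℤ) * ((u - 1) * c) = (p : ℤ) * v ^ 2 := by
          linear_combination (-(u - 1)) * hc + heq
        exact mul_left_cancel₀ hpz.ne_zero h4
      have hcop2 : IsCoprime (u - 1) c :=
        hcop.of_isCoprime_of_dvd_right ⟨p, by rw [hc]; ring⟩
      obtain ⟨a0, ha0⟩ := Int.sq_of_isCoprime hcop2 hkey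
      obtain ⟨b0, hb0⟩ := Int.sq_of_isCoprime hcop2.symm
        (show c * (u - 1) = v ^ 2 by linear_combination hkey)
      have ha0' : u - 1 = a0 ^ 2 := by
        rcases ha0 with h' | h'
        · exact h'
        · exfalso; linarith [sq_nonneg a0]
      have hc0 : 0 < c := by
        rcases mul_pos_iff.mp (show (0:ℤ) < (p:ℤ) * c by linarith) with ⟨_, h'⟩ | ⟨h', _⟩
        · exact h'
        · linarith
      have hb0' : c = b0 ^ 2 := by
        rcases hb0 with h' | h'
        · exact h'
        · exfalso; linarith [sq_nonneg b0]
      exact ⟨a0, b0, by linear_combination -ha0' + hc + (p : ℤ) * hb0'⟩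
  · -- u odd
    obtain ⟨k, hk⟩ := huo
    have hk1 : 1 ≤ k := by omega
    have hvev : Even v := by
      have h2 : (2 : ℤ) ∣ (p : ℤ) * v ^ 2 :=
        ⟨2 * k ^ 2 + 2 * k, by linear_combination -heq + (u + 2 * k + 1) * hk⟩
      have hpodd : ¬ (2 : ℤ) ∣ (p : ℤ) := by
        rw [Int.two_dvd_ne_zero]
        omega
      rcases (Int.prime_two.dvd_mul.mp h2) with h' | h'
      · exact absurd h' hpodd
      · have : Even (v ^ 2) := (even_iff_two_dvd).mpr h'
        exact (Int.even_pow.mp this).1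
    obtain ⟨w, hw⟩ := hvev
    have key : k * (k + 1) = (p : ℤ) * w ^ 2 := by
      have h4 : (4 : ℤ) * (k * (k + 1)) = 4 * ((p : ℤ) * w ^ 2) := by
        linear_combination heq - (u + 2 * k + 1) * hk + (p : ℤ) * (v + 2 * w) * hw
      exact mul_left_cancel₀ (by norm_num : (4:ℤ) ≠ 0) h4
    have hcopk : IsCoprime k (k + 1) := ⟨-1, 1, by ring⟩
    have hdvd : (p : ℤ) ∣ k * (k + 1) := ⟨w ^ 2, key⟩
    rcases hpz.dvd_mul.mp hdvd with hd1 | hd2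
    · -- p ∣ k : gives a smaller solution, contradiction with fundamentality
      obtain ⟨c, hc⟩ := hd1
      have hkey : (k + 1) * c = w ^ 2 := by
        have h4 : (p : ℤ) * ((k + 1) * c) = (p : ℤ) * w ^ 2 := by
          linear_combination (-(k + 1)) * hc + key
        exact mul_left_cancel₀ hpz.ne_zero h4
      have hcop2 : IsCoprime (k + 1) c :=
        hcopk.symm.of_isCoprime_of_dvd_right ⟨p, by rw [hc]; ring⟩
      obtain ⟨a0, ha0⟩ := Int.sq_of_isCoprime hcop2 hkey
      obtain ⟨b0, hb0⟩ := Int.sq_of_isCoprime hcop2.symm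
        (show c * (k + 1) = w ^ 2 by linear_combination hkey)
      have ha0' : k + 1 = a0 ^ 2 := by
        rcases ha0 with h' | h'
        · exact h'
        · exfalso; linarith [sq_nonneg a0]
      have hc0 : 0 < c := by
        rcases mul_pos_iff.mp (show (0:ℤ) < (p:ℤ) * c by linarith) with ⟨_, h'⟩ | ⟨h', _⟩
        · exact h'
        · linarith
      have hb0' : c = b0 ^ 2 := by
        rcases hb0 with h' | h'
        · exact h'
        · exfalso; linarith [sq_nonneg b0]
      have hsol : |a0| ^ 2 - (p : ℤ) * |b0| ^ 2 = 1 := by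
        rw [sq_abs, sq_abs]
        linear_combination -ha0' + hc + (p : ℤ) * hb0'
      set b := Pell.Solution₁.mk |a0| |b0| hsol with hb
      have hbx : 1 < b.x := by
        rw [hb, Pell.Solution₁.x_mk]
        nlinarith [sq_abs a0, abs_nonneg a0, hk1, ha0']
      have hle := hfund.2.2 hbx
      rw [hb, Pell.Solution₁.x_mk] at hle
      exfalso
      nlinarith [sq_abs a0, abs_nonneg a0, hk1, hu1, ha0', hk, hle]
    · -- p ∣ k + 1 : gives a² - p b² = -1, impossible mod 4
      obtain ⟨c, hc⟩ := hd2
      have hkey : k * c = w ^ 2 := by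
        have h4 : (p : ℤ) * (k * c) = (p : ℤ) * w ^ 2 := by
          linear_combination (-k) * hc + key
        exact mul_left_cancel₀ hpz.ne_zero h4
      have hcop2 : IsCoprime k c :=
        hcopk.of_isCoprime_of_dvd_right ⟨p, by rw [hc]; ring⟩
      obtain ⟨a0, ha0⟩ := Int.sq_of_isCoprime hcop2 hkey
      obtain ⟨b0, hb0⟩ := Int.sq_of_isCoprime hcop2.symm
        (show c * k = w ^ 2 by linear_combination hkey)
      have ha0' : k = a0 ^ 2 := by
        rcases ha0 with h' | h'
        · exact h'
        · exfalso; linarith [sq_nonneg a0]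
      have hc0 : 0 < c := by
        rcases mul_pos_iff.mp (show (0:ℤ) < (p:ℤ) * c by linarith) with ⟨_, h'⟩ | ⟨h', _⟩
        · exact h'
        · linarith
      have hb0' : c = b0 ^ 2 := by
        rcases hb0 with h' | h'
        · exact h'
        · exfalso; linarith [sq_nonneg b0]
      exact absurd
        (show a0 ^ 2 - (p : ℤ) * b0 ^ 2 = -1 by
          linear_combination -ha0' + hc + (p : ℤ) * hb0')
        (no_neg_one p h a0 b0)
end

section
/- For a prime p ≡ 7 (mod 8), the diophantine equation x² - p·y² = 2 has an integer solution. -/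
private lemma zmod8_no1 : ∀ x y : ZMod 8, x ^ 2 + 1 ≠ 7 * y ^ 2 := by decide

private lemma zmod8_no2 : ∀ x y : ZMod 8, (2 * x + 1) ^ 2 + 2 ≠ 7 * (2 * y + 1) ^ 2 := by decide

private lemma p_cast8 {p : ℕ} (h : p % 8 = 7) : (p : ZMod 8) = 7 := by
  rw [← ZMod.natCast_mod p 8, h]; rfl

private lemma pick_sq {x w : ℤ} (h : x = w ^ 2 ∨ x = -w ^ 2) (hx : 0 < x) : x = w ^ 2 := by
  rcases h with h | h
  · exact h
  · nlinarith [sq_nonneg w]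

private lemma natAbs_sq' (u : ℤ) : (u.natAbs : ℤ) ^ 2 = u ^ 2 := by
  rw [Int.natCast_natAbs, sq_abs]

private lemma descent (p : ℕ) (hp : p.Prime) (h : p % 8 = 7) :
    ∀ n : ℕ, ∀ b : ℤ, (n : ℤ) ^ 2 - (p : ℤ) * b ^ 2 = 1 → b ≠ 0 →
      ∃ x y : ℤ, x ^ 2 - (p : ℤ) * y ^ 2 = 2 := by
  intro n
  induction n using Nat.strong_induction_on with
  | _ n ih =>
  intro b heq hb
  have hpz : (0 : ℤ) < (p : ℤ) := by exact_mod_cast hp.pos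
  have hpp : Prime ((p : ℤ)) := Nat.prime_iff_prime_int.mp hp
  have hp8 : (p : ZMod 8) = 7 := p_cast8 h
  set a : ℤ := (n : ℤ) with ha
  have hb2 : 0 < b ^ 2 := by positivity
  have hn1 : 1 ≤ a := by
    rcases Nat.eq_zero_or_pos n with h0 | h0
    · exfalso; rw [ha, h0] at heq; push_cast at heq; nlinarith
    · show (1 : ℤ) ≤ (n : ℤ); exact_mod_cast h0
  have hfac : (a - 1) * (a + 1) = (p : ℤ) * b ^ 2 := by linarith [heq, sq_nonneg a]
  rcases Int.even_or_odd a with hev | hodd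
  · -- a even
    obtain ⟨m, hm⟩ := hev
    have ha2 : 2 ≤ a := by omega
    -- b is odd
    have hbo : b % 2 = 1 := by
      rcases Int.even_or_odd b with ⟨c, hc⟩ | hbo
      · exfalso
        have h4 : (4 : ℤ) ∣ 1 := ⟨m ^ 2 - (p : ℤ) * c ^ 2, by
          rw [hm, hc] at heq; linear_combination -heq⟩
        norm_num at h4
      · obtain ⟨k, hk⟩ := hbo; omega
    have hcop : IsCoprime (a - 1) (a + 1) := ⟨m, 1 - m, by rw [hm]; ring⟩
    have hpdvd : (p : ℤ) ∣ (a - 1) * (a + 1) := ⟨b ^ 2, hfac⟩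
    rcases hpp.dvd_mul.mp hpdvd with hd | hd
    · -- p ∣ a - 1 : good branch, a + 1 = u^2, a - 1 = p v^2
      obtain ⟨t, ht⟩ := hd
      have htpos : 0 < t := by nlinarith
      have hprod : (a + 1) * t = b ^ 2 := by
        have : (p : ℤ) * ((a + 1) * t) = (p : ℤ) * b ^ 2 := by rw [← hfac, ht]; ring
        exact mul_left_cancel₀ (by positivity) this
      have hcop2 : IsCoprime (a + 1) t :=
        (hcop.symm).of_isCoprime_of_dvd_right ⟨(p : ℤ), by rw [ht]; ring⟩
      obtain ⟨u, hu⟩ := Int.sq_of_isCoprime hcop2 hprod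
      obtain ⟨v, hv⟩ := Int.sq_of_isCoprime (hcop2.symm) (by rw [← hprod]; ring)
      have hu' : a + 1 = u ^ 2 := pick_sq hu (by omega)
      have hv' : t = v ^ 2 := pick_sq hv htpos
      have hgood : a - 1 = (p : ℤ) * v ^ 2 := by rw [ht, hv']
      exact ⟨u, v, by rw [← hu']; linarith⟩
    · -- p ∣ a + 1 : contradiction mod 8
      exfalso
      obtain ⟨t, ht⟩ := hd
      have htpos : 0 < t := by nlinarith
      have hprod : (a - 1) * t = b ^ 2 := by
        have : (p : ℤ) * ((a - 1) * t) = (p : ℤ) * b ^ 2 := by rw [← hfac, ht]; ring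
        exact mul_left_cancel₀ (by positivity) this
      have hcop2 : IsCoprime (a - 1) t :=
        hcop.of_isCoprime_of_dvd_right ⟨(p : ℤ), by rw [ht]; ring⟩
      obtain ⟨u, hu⟩ := Int.sq_of_isCoprime hcop2 hprod
      obtain ⟨v, hv⟩ := Int.sq_of_isCoprime (hcop2.symm) (by rw [← hprod]; ring)
      have hu' : a - 1 = u ^ 2 := pick_sq hu (by omega)
      have hv' : t = v ^ 2 := pick_sq hv htpos
      -- u, v odd
      have hbuv : b ^ 2 = (u * v) ^ 2 := by rw [← hprod, hu', hv']; ring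
      have huodd : u % 2 = 1 := by
        rcases Int.even_or_odd u with ⟨k, hk⟩ | ho
        · exfalso
          have hA : a - 1 = 4 * k ^ 2 := by rw [hu', hk]; ring
          have h4 : (2 : ℤ) ∣ 1 := ⟨m - 2 * k ^ 2, by rw [hm] at hA; linarith⟩
          norm_num at h4
        · obtain ⟨k2, hk2⟩ := ho; omega
      have hvodd : v % 2 = 1 := by
        rcases Int.even_or_odd v with ⟨k, hk⟩ | ho
        · exfalso
          have h1 : b ^ 2 = 4 * (u * k) ^ 2 := by rw [hbuv, hk]; ring
          obtain ⟨l, hl⟩ : ∃ l, b = 2 * l + 1 := ⟨b / 2, by omega⟩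
          have h2 : 4 * l ^ 2 + 4 * l + 1 = 4 * (u * k) ^ 2 := by rw [← h1, hl]; ring
          have h4 : (4 : ℤ) ∣ 1 := ⟨(u * k) ^ 2 - l ^ 2 - l, by linarith⟩
          norm_num at h4
        · obtain ⟨k2, hk2⟩ := ho; omega
      -- equation u^2 + 2 = p * v^2
      have hkey : u ^ 2 + 2 = (p : ℤ) * v ^ 2 := by
        have hx : a + 1 = (p : ℤ) * v ^ 2 := by rw [ht, hv']
        linarith
      obtain ⟨k, hk⟩ : ∃ k, u = 2 * k + 1 := ⟨u / 2, by omega⟩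
      obtain ⟨l, hl⟩ : ∃ l, v = 2 * l + 1 := ⟨v / 2, by omega⟩
      apply zmod8_no2 (k : ZMod 8) (l : ZMod 8)
      rw [hk, hl] at hkey
      have hc := congrArg (fun z : ℤ => (z : ZMod 8)) hkey
      push_cast at hc
      rw [hp8] at hc
      exact hc
  · -- a odd
    obtain ⟨s, hs⟩ := hodd
    have hbe : b % 2 = 0 := by
      rcases Int.even_or_odd b with ⟨c, hc⟩ | hbo
      · omega
      · exfalso
        obtain ⟨l, hl⟩ := hbo
        have h4 : 4 * (s ^ 2 + s) - 4 * ((p : ℤ) * (l ^ 2 + l)) - (p : ℤ) = 0 := by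
          rw [hs, hl] at heq; linear_combination heq
        obtain ⟨A, hA⟩ : Even (s ^ 2 + s) := by
          have := Int.even_mul_succ_self s; simpa [sq, mul_add, add_comm] using this
        obtain ⟨B, hB⟩ : Even (l ^ 2 + l) := by
          have := Int.even_mul_succ_self l; simpa [sq, mul_add, add_comm] using this
        have h8 : (8 : ℤ) ∣ (p : ℤ) := ⟨A - (p : ℤ) * B, by rw [hA, hB] at h4; linarith⟩
        have h8' : (8 : ℕ) ∣ p := by exact_mod_cast h8
        omega
    obtain ⟨c, hc⟩ : ∃ c, b = 2 * c := ⟨b / 2, by omega⟩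
    have hcne : c ≠ 0 := by rintro rfl; simp at hc; exact hb hc
    have hprod0 : s * (s + 1) = (p : ℤ) * c ^ 2 := by
      have hx : (2 * s) * (2 * (s + 1)) = (p : ℤ) * (2 * c) ^ 2 := by
        rw [← hc, ← hfac, hs]; ring
      nlinarith [hx]
    -- a ≥ 3, i.e. s ≥ 1
    have hsge : 1 ≤ s := by
      rcases le_or_gt 1 s with h1 | h1
      · exact h1
      · exfalso
        have ha1 : a = 1 := by omega
        rw [ha1] at heq
        have h0 : (p : ℤ) * b ^ 2 = 0 := by linarith
        rcases mul_eq_zero.mp h0 with h' | h'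
        · exact absurd h' hpz.ne'
        · exact hb (sq_eq_zero_iff.mp h')
    have hcop : IsCoprime s (s + 1) := ⟨-1, 1, by ring⟩
    have hpdvd : (p : ℤ) ∣ s * (s + 1) := ⟨c ^ 2, hprod0⟩
    have hc2 : 0 < c ^ 2 := by positivity
    rcases hpp.dvd_mul.mp hpdvd with hd | hd
    · -- p ∣ s : s = p v^2, s + 1 = u^2, descent
      obtain ⟨t, ht⟩ := hd
      have htpos : 0 < t := by nlinarith
      have hprod : (s + 1) * t = c ^ 2 := by
        have hx : (p : ℤ) * ((s + 1) * t) = (p : ℤ) * c ^ 2 := by rw [← hprod0, ht]; ring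
        exact mul_left_cancel₀ (by positivity) hx
      have hcop2 : IsCoprime (s + 1) t :=
        (hcop.symm).of_isCoprime_of_dvd_right ⟨(p : ℤ), by rw [ht]; ring⟩
      obtain ⟨u, hu⟩ := Int.sq_of_isCoprime hcop2 hprod
      obtain ⟨v, hv⟩ := Int.sq_of_isCoprime (hcop2.symm) (by rw [← hprod]; ring)
      have hu' : s + 1 = u ^ 2 := pick_sq hu (by omega)
      have hv' : t = v ^ 2 := pick_sq hv htpos
      have hvne : v ≠ 0 := by rintro rfl; simp at hv'; omega
      have hnew : ((u.natAbs : ℤ)) ^ 2 - (p : ℤ) * v ^ 2 = 1 := by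
        rw [natAbs_sq' u, ← hu', ht, hv']; ring
      have hlt : u.natAbs < n := by
        have h2 : (u.natAbs : ℤ) ^ 2 < a := by rw [natAbs_sq' u, ← hu']; omega
        have h3 : (u.natAbs : ℤ) ≤ (u.natAbs : ℤ) ^ 2 := by
          have h0 : (0 : ℤ) ≤ (u.natAbs : ℤ) := Int.natCast_nonneg _
          nlinarith
        have h5 : (u.natAbs : ℤ) < a := lt_of_le_of_lt h3 h2
        rw [ha] at h5
        omega
      exact ih u.natAbs hlt v hnew hvne
    · -- p ∣ s + 1 : contradiction u^2 + 1 = p v^2 mod 8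
      exfalso
      obtain ⟨t, ht⟩ := hd
      have htpos : 0 < t := by nlinarith
      have hprod : s * t = c ^ 2 := by
        have hx : (p : ℤ) * (s * t) = (p : ℤ) * c ^ 2 := by rw [← hprod0, ht]; ring
        exact mul_left_cancel₀ (by positivity) hx
      have hcop2 : IsCoprime s t :=
        hcop.of_isCoprime_of_dvd_right ⟨(p : ℤ), by rw [ht]; ring⟩
      obtain ⟨u, hu⟩ := Int.sq_of_isCoprime hcop2 hprod
      obtain ⟨v, hv⟩ := Int.sq_of_isCoprime (hcop2.symm) (by rw [← hprod]; ring)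
      have hu' : s = u ^ 2 := pick_sq hu (by omega)
      have hv' : t = v ^ 2 := pick_sq hv htpos
      have hkey : u ^ 2 + 1 = (p : ℤ) * v ^ 2 := by rw [← hu', ← hv', ← ht]
      apply zmod8_no1 (u : ZMod 8) (v : ZMod 8)
      have hc8 := congrArg (fun z : ℤ => (z : ZMod 8)) hkey
      push_cast at hc8
      rw [hp8] at hc8
      exact hc8

theorem pell_two_solvable (p : ℕ) (hp : p.Prime) (h : p % 8 = 7) :
    ∃ x y : ℤ, x ^ 2 - (p : ℤ) * y ^ 2 = 2 := by
  have hpos : (0 : ℤ) < (p : ℤ) := by exact_mod_cast hp.pos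
  have hns : ¬IsSquare ((p : ℤ)) := (Nat.prime_iff_prime_int.mp hp).not_isSquare
  obtain ⟨x, y, hxy, hy⟩ := Pell.exists_of_not_isSquare hpos hns
  exact descent p hp h x.natAbs y (by rw [natAbs_sq' x]; exact hxy) hy
end

section
/- For any odd prime p, exactly one of the three diophantine equations x² - p·y² = -1, x² - p·y² = 2, x² - p·y² = -2 has an integer solution. -/
private lemma pell_mod8' (p : ℕ) (c : ℤ) (h : ∃ x y : ℤ, x ^ 2 - (p : ℤ) * y ^ 2 = c) :
    ∃ x y : ZMod 8, x ^ 2 - ((p % 8 : ℕ) : ZMod 8) * y ^ 2 = (c : ZMod 8) := by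
  obtain ⟨x, y, hxy⟩ := h
  refine ⟨(x : ZMod 8), (y : ZMod 8), ?_⟩
  have := congrArg (fun z : ℤ => (z : ZMod 8)) hxy
  push_cast at this
  rw [ZMod.natCast_mod]
  exact this

set_option maxHeartbeats 1000000 in
private lemma pell_exists' (p : ℕ) (hp : p.Prime) (hodd : p ≠ 2) :
    (∃ x y : ℤ, x ^ 2 - (p : ℤ) * y ^ 2 = -1) ∨
    (∃ x y : ℤ, x ^ 2 - (p : ℤ) * y ^ 2 = 2) ∨
    (∃ x y : ℤ, x ^ 2 - (p : ℤ) * y ^ 2 = -2) := by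
  have hpI : Prime ((p : ℤ)) := Nat.prime_iff_prime_int.mp hp
  have hd0 : (0 : ℤ) < (p : ℤ) := by exact_mod_cast hp.pos
  have hdns : ¬ IsSquare ((p : ℤ)) := hpI.not_isSquare
  obtain ⟨a, ha⟩ := Pell.IsFundamental.exists_of_not_isSquare hd0 hdns
  set X := a.x with hXdef
  set Y := a.y with hYdef
  have hX1 : 1 < X := ha.1
  have hY0 : 0 < Y := ha.2.1
  have hprop : X ^ 2 - (p : ℤ) * Y ^ 2 = 1 := a.prop
  have key : (X - 1) * (X + 1) = (p : ℤ) * Y ^ 2 := by linear_combination hprop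
  have hpodd : Odd (p : ℤ) := by
    have := hp.odd_of_ne_two hodd
    exact_mod_cast this
  rcases Int.even_or_odd X with hxe | hxo
  · -- X even: get 2 or -2
    obtain ⟨m, hm⟩ := hxe
    have hco : IsCoprime (X - 1) (X + 1) := ⟨m, 1 - m, by rw [hm]; ring⟩
    have hdvd : (p : ℤ) ∣ (X - 1) * (X + 1) := ⟨Y ^ 2, key⟩
    rcases hpI.dvd_mul.mp hdvd with hdl | hdr
    · -- p ∣ X - 1 : solution of  = 2
      obtain ⟨k, hk⟩ := hdl
      have hky : (X + 1) * k = Y ^ 2 := by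
        have h2 : (p : ℤ) * ((X + 1) * k) = (p : ℤ) * Y ^ 2 := by
          rw [← key, hk]; ring
        exact mul_left_cancel₀ (by positivity) h2
      have hco2 : IsCoprime (X + 1) k :=
        hco.symm.of_isCoprime_of_dvd_right ⟨(p : ℤ), by rw [hk]; ring⟩
      obtain ⟨t, ht⟩ := Int.sq_of_isCoprime hco2 hky
      have ht' : X + 1 = t ^ 2 := by
        rcases ht with h | h
        · exact h
        · nlinarith [sq_nonneg t]
      have hky' : k * (X + 1) = Y ^ 2 := by rw [mul_comm]; exact hky
      obtain ⟨s, hs⟩ := Int.sq_of_isCoprime hco2.symm hky'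
      have hk0 : 0 < k := by nlinarith
      have hs' : k = s ^ 2 := by
        rcases hs with h | h
        · exact h
        · nlinarith [sq_nonneg s]
      refine Or.inr (Or.inl ⟨t, s, ?_⟩)
      rw [← ht', ← hs']
      linarith [hk]
    · -- p ∣ X + 1 : solution of = -2
      obtain ⟨k, hk⟩ := hdr
      have hky : (X - 1) * k = Y ^ 2 := by
        have h2 : (p : ℤ) * ((X - 1) * k) = (p : ℤ) * Y ^ 2 := by
          rw [← key, hk]; ring
        exact mul_left_cancel₀ (by positivity) h2
      have hco2 : IsCoprime (X - 1) k :=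
        hco.of_isCoprime_of_dvd_right ⟨(p : ℤ), by rw [hk]; ring⟩
      obtain ⟨s, hs⟩ := Int.sq_of_isCoprime hco2 hky
      have hs' : X - 1 = s ^ 2 := by
        rcases hs with h | h
        · exact h
        · nlinarith [sq_nonneg s]
      have hky' : k * (X - 1) = Y ^ 2 := by rw [mul_comm]; exact hky
      obtain ⟨t, ht⟩ := Int.sq_of_isCoprime hco2.symm hky'
      have hk0 : 0 < k := by nlinarith
      have ht' : k = t ^ 2 := by
        rcases ht with h | h
        · exact h
        · nlinarith [sq_nonneg t]
      refine Or.inr (Or.inr ⟨s, t, ?_⟩)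
      rw [← hs', ← ht']
      linarith [hk]
  · -- X odd
    obtain ⟨m, hm⟩ := hxo
    have hYeven : Even Y := by
      by_contra hYo
      have hYodd : Odd Y := Int.not_even_iff_odd.mp hYo
      have h1 : Odd ((p : ℤ) * Y ^ 2) := hpodd.mul (hYodd.pow)
      have h2 : Even ((X - 1) * (X + 1)) := by
        refine Even.mul_right ?_ _
        exact ⟨m, by rw [hm]; ring⟩
      rw [key] at h2
      exact (Int.not_odd_iff_even.mpr h2) h1
    obtain ⟨c, hc⟩ := hYeven
    have key2 : m * (m + 1) = (p : ℤ) * c ^ 2 := by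
      have h := key
      rw [hm, hc] at h
      have h4 : (4:ℤ) * (m * (m + 1)) = 4 * ((p : ℤ) * c ^ 2) := by linear_combination h
      linarith
    have hm1 : 1 ≤ m := by omega
    have hco : IsCoprime m (m + 1) := ⟨-1, 1, by ring⟩
    have hdvd : (p : ℤ) ∣ m * (m + 1) := ⟨c ^ 2, key2⟩
    rcases hpI.dvd_mul.mp hdvd with hdl | hdr
    · -- p ∣ m : leads to contradiction with fundamentality
      exfalso
      obtain ⟨k, hk⟩ := hdl
      have hky : (m + 1) * k = c ^ 2 := by
        have h2 : (p : ℤ) * ((m + 1) * k) = (p : ℤ) * c ^ 2 := by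
          rw [← key2, hk]; ring
        exact mul_left_cancel₀ (by positivity) h2
      have hco2 : IsCoprime (m + 1) k :=
        hco.symm.of_isCoprime_of_dvd_right ⟨(p : ℤ), by rw [hk]; ring⟩
      obtain ⟨t, ht⟩ := Int.sq_of_isCoprime hco2 hky
      have ht' : m + 1 = t ^ 2 := by
        rcases ht with h | h
        · exact h
        · nlinarith [sq_nonneg t]
      have hky' : k * (m + 1) = c ^ 2 := by rw [mul_comm]; exact hky
      obtain ⟨s, hs⟩ := Int.sq_of_isCoprime hco2.symm hky'
      have hk0 : 0 < k := by nlinarith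
      have hs' : k = s ^ 2 := by
        rcases hs with h | h
        · exact h
        · nlinarith [sq_nonneg s]
      have hb : |t| ^ 2 - (p : ℤ) * |s| ^ 2 = 1 := by
        rw [sq_abs, sq_abs, ← ht', ← hs']
        linarith [hk]
      have hbx : 1 < (Pell.Solution₁.mk |t| |s| hb).x := by
        rw [Pell.Solution₁.x_mk]
        nlinarith [abs_nonneg t, sq_abs t]
      have hle := ha.2.2 hbx
      rw [Pell.Solution₁.x_mk] at hle
      nlinarith [sq_abs t, hle, hm, hm1, ht']
    · -- p ∣ m + 1 : solution of = -1
      obtain ⟨k, hk⟩ := hdr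
      have hky : m * k = c ^ 2 := by
        have h2 : (p : ℤ) * (m * k) = (p : ℤ) * c ^ 2 := by
          rw [← key2, hk]; ring
        exact mul_left_cancel₀ (by positivity) h2
      have hco2 : IsCoprime m k :=
        hco.of_isCoprime_of_dvd_right ⟨(p : ℤ), by rw [hk]; ring⟩
      obtain ⟨s, hs⟩ := Int.sq_of_isCoprime hco2 hky
      have hs' : m = s ^ 2 := by
        rcases hs with h | h
        · exact h
        · nlinarith [sq_nonneg s]
      have hky' : k * m = c ^ 2 := by rw [mul_comm]; exact hky
      obtain ⟨t, ht⟩ := Int.sq_of_isCoprime hco2.symm hky'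
      have hk0 : 0 < k := by nlinarith
      have ht' : k = t ^ 2 := by
        rcases ht with h | h
        · exact h
        · nlinarith [sq_nonneg t]
      refine Or.inl ⟨s, t, ?_⟩
      rw [← hs', ← ht']
      linarith [hk]

theorem exactly_one_pell_solvable (p : ℕ) (hp : p.Prime) (hodd : p ≠ 2) :
    ((∃ x y : ℤ, x ^ 2 - (p : ℤ) * y ^ 2 = -1) ∧
      ¬ (∃ x y : ℤ, x ^ 2 - (p : ℤ) * y ^ 2 = 2) ∧
      ¬ (∃ x y : ℤ, x ^ 2 - (p : ℤ) * y ^ 2 = -2)) ∨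
    (¬ (∃ x y : ℤ, x ^ 2 - (p : ℤ) * y ^ 2 = -1) ∧
      (∃ x y : ℤ, x ^ 2 - (p : ℤ) * y ^ 2 = 2) ∧
      ¬ (∃ x y : ℤ, x ^ 2 - (p : ℤ) * y ^ 2 = -2)) ∨
    (¬ (∃ x y : ℤ, x ^ 2 - (p : ℤ) * y ^ 2 = -1) ∧
      ¬ (∃ x y : ℤ, x ^ 2 - (p : ℤ) * y ^ 2 = 2) ∧
      (∃ x y : ℤ, x ^ 2 - (p : ℤ) * y ^ 2 = -2)) := by
  have hp2 : p % 2 = 1 := Nat.odd_iff.mp (hp.odd_of_ne_two hodd)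
  have h8 : p % 8 = 1 ∨ p % 8 = 3 ∨ p % 8 = 5 ∨ p % 8 = 7 := by omega
  -- consequences mod 8
  have hA : (∃ x y : ℤ, x ^ 2 - (p : ℤ) * y ^ 2 = -1) → (p % 8 = 1 ∨ p % 8 = 5) := by
    intro h
    have h8' := pell_mod8' p (-1) h
    rcases h8 with h1 | h1 | h1 | h1 <;> rw [h1] at h8' <;>
      first
        | (left; exact h1)
        | (right; exact h1)
        | (exfalso; revert h8'; decide)
  have hB : (∃ x y : ℤ, x ^ 2 - (p : ℤ) * y ^ 2 = 2) → p % 8 = 7 := by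
    intro h
    have h8' := pell_mod8' p 2 h
    rcases h8 with h1 | h1 | h1 | h1 <;> rw [h1] at h8' <;>
      first
        | exact h1
        | (exfalso; revert h8'; decide)
  have hC : (∃ x y : ℤ, x ^ 2 - (p : ℤ) * y ^ 2 = -2) → p % 8 = 3 := by
    intro h
    have h8' := pell_mod8' p (-2) h
    rcases h8 with h1 | h1 | h1 | h1 <;> rw [h1] at h8' <;>
      first
        | exact h1
        | (exfalso; revert h8'; decide)
  rcases pell_exists' p hp hodd with h | h | h
  · exact Or.inl ⟨h, fun h' => by have := hA h; have := hB h'; omega,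
      fun h' => by have := hA h; have := hC h'; omega⟩
  · exact Or.inr (Or.inl ⟨fun h' => by have := hA h'; have := hB h; omega, h,
      fun h' => by have := hB h; have := hC h'; omega⟩)
  · exact Or.inr (Or.inr ⟨fun h' => by have := hA h'; have := hC h; omega,
      fun h' => by have := hB h'; have := hC h; omega, h⟩)
end

section
/- If p is a prime with p ≡ 3 (mod 4), then the period length of the continued fraction expansion of √p is even. -/
/-- The value of a finite continued fraction [x₀; x₁, ..., xₙ]. -/
noncomputable def cfFinite : List ℝ → ℝ
  | [] => 0
  | [x] => x
  | x :: y :: xs => x + (cfFinite (y :: xs))⁻¹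

/-- The eventually periodic sequence with initial term `a₀` and repeating block `L`. -/
def periodicSeq (a₀ : ℕ) (L : List ℕ) : ℕ → ℕ
  | 0 => a₀
  | n + 1 => L.getD (n % L.length) 0

/-- `x` is the value of the infinite continued fraction with partial quotients `a`,
i.e. the limit of the finite convergents. -/
def cfValue (a : ℕ → ℕ) (x : ℝ) : Prop :=
  Filter.Tendsto
    (fun n => cfFinite (((List.range (n + 1)).map a).map (fun k : ℕ => (k : ℝ))))
    Filter.atTop (nhds x)

/-- `x` is the value of the infinite periodic continued fraction
`[a₀; L repeated]`. -/
def IsPeriodicCF (a₀ : ℕ) (L : List ℕ) (x : ℝ) : Prop :=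
  cfValue (periodicSeq a₀ L) x

/-- `P` is the minimal period length of the continued fraction expansion of `√D`. -/
def IsMinPeriodCF (D P : ℕ) : Prop :=
  0 < P ∧
  (∃ L : List ℕ, L.length = P ∧ IsPeriodicCF (Nat.sqrt D) L (Real.sqrt D)) ∧
  ∀ Q : ℕ, 0 < Q → Q < P →
    ¬ ∃ L : List ℕ, L.length = Q ∧ IsPeriodicCF (Nat.sqrt D) L (Real.sqrt D)

/-- Partial continued-fraction Möbius-type map. -/
noncomputable def cfF : List ℝ → ℝ → ℝ
  | [], v => v
  | x :: xs, v => x + (cfF xs v)⁻¹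

lemma cfFinite_cons (x : ℝ) (l : List ℝ) (hl : l ≠ []) :
    cfFinite (x :: l) = x + (cfFinite l)⁻¹ := by
  cases l with
  | nil => simp at hl
  | cons y ys => rfl

lemma cfFinite_append (L S : List ℝ) (hS : S ≠ []) :
    cfFinite (L ++ S) = cfF L (cfFinite S) := by
  induction L with
  | nil => simp [cfF]
  | cons x xs ih =>
      have hne : xs ++ S ≠ [] := fun h0 => hS (List.append_eq_nil_iff.mp h0).2
      rw [List.cons_append, cfFinite_cons _ _ hne, ih]
      rfl

lemma irrational_inv {x : ℝ} (hx : Irrational x) : Irrational x⁻¹ := by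
  rintro ⟨q, hq⟩
  exact hx ⟨q⁻¹, by push_cast; rw [hq, inv_inv]⟩

lemma irrational_moebius (A B C D : ℤ) (hdet : A * D - B * C ≠ 0) (v : ℝ)
    (hv : Irrational v) (hden : (C : ℝ) * v + D ≠ 0) :
    Irrational (((A : ℝ) * v + B) / ((C : ℝ) * v + D)) := by
  rintro ⟨q, hq⟩
  rw [eq_div_iff hden] at hq
  have h1 : (A : ℝ) * v + B = (q : ℝ) * ((C : ℝ) * v + D) := hq.symm
  have h2 : ((A : ℝ) - q * C) * v = q * D - B := by linear_combination h1
  by_cases hAC : (A : ℝ) - q * C = 0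
  · have hB : (B : ℝ) = q * D := by
      rw [hAC, zero_mul] at h2; linarith
    have hA : (A : ℝ) = q * C := by linarith
    have hz : ((A * D - B * C : ℤ) : ℝ) = 0 := by push_cast; rw [hA, hB]; ring
    exact hdet (by exact_mod_cast hz)
  · apply hv
    refine ⟨(q * D - B) / ((A : ℚ) - q * C), ?_⟩
    push_cast
    rw [div_eq_iff hAC]
    linear_combination -h2

lemma cfF_moebius (v : ℝ) (hv : Irrational v) :
    ∀ L : List ℕ, ∃ A B C D : ℤ,
      A * D - B * C = (-1) ^ L.length ∧
      ((C : ℝ) * v + (D : ℝ)) ≠ 0 ∧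
      cfF (L.map (fun n : ℕ => (n : ℝ))) v = ((A : ℝ) * v + B) / ((C : ℝ) * v + D) ∧
      ContinuousAt (cfF (L.map (fun n : ℕ => (n : ℝ)))) v := by
  intro L
  induction L with
  | nil =>
      refine ⟨1, 0, 0, 1, by norm_num, by norm_num, by simp [cfF], ?_⟩
      have : cfF ((List.map (fun n : ℕ => (n : ℝ))) []) = id := by
        funext w; rfl
      rw [this]
      exact continuousAt_id
  | cons x xs ih =>
      obtain ⟨A, B, C, D, hdet, hden, hrep, hcont⟩ := ih
      have hdet0 : A * D - B * C ≠ 0 := by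
        rw [hdet]; exact pow_ne_zero _ (by norm_num)
      have hw_irr : Irrational (cfF (xs.map (fun n : ℕ => (n : ℝ))) v) := by
        rw [hrep]; exact irrational_moebius A B C D hdet0 v hv hden
      have hw0 : cfF (xs.map (fun n : ℕ => (n : ℝ))) v ≠ 0 := hw_irr.ne_zero
      have hnum0 : (A : ℝ) * v + B ≠ 0 := by
        intro h0
        apply hw0
        rw [hrep, h0, zero_div]
      refine ⟨x * A + C, x * B + D, A, B, ?_, hnum0, ?_, ?_⟩
      · simp only [List.length_cons, pow_succ]
        linear_combination (-1 : ℤ) * hdet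
      · show (x : ℝ) + (cfF (xs.map (fun n : ℕ => (n : ℝ))) v)⁻¹ = _
        rw [hrep, inv_div, eq_div_iff hnum0]
        push_cast
        rw [add_mul, div_mul_cancel₀ _ hnum0]
        ring
      · show ContinuousAt (fun w => (x : ℝ) + (cfF (xs.map (fun n : ℕ => (n : ℝ))) w)⁻¹) v
        exact continuousAt_const.add (hcont.inv₀ hw0)

lemma int_lin_indep {s : ℝ} (hs : Irrational s) (X Y : ℤ)
    (hXY : (X : ℝ) + (Y : ℝ) * s = 0) : X = 0 ∧ Y = 0 := by
  by_cases hY : Y = 0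
  · refine ⟨?_, hY⟩
    rw [hY] at hXY
    push_cast at hXY
    exact_mod_cast (by linarith : (X : ℝ) = 0)
  · exfalso
    apply hs
    refine ⟨(-X : ℚ) / (Y : ℚ), ?_⟩
    have hY' : (Y : ℝ) ≠ 0 := Int.cast_ne_zero.mpr hY
    push_cast
    rw [div_eq_iff hY']
    linarith

theorem period_even_of_three_mod_four (p : ℕ) (hp : p.Prime) (h : p % 4 = 3)
    (P : ℕ) (hP : IsMinPeriodCF p P) : Even P := by
  obtain ⟨hPpos, ⟨L, hLlen, hcf⟩, -⟩ := hP
  by_contra hodd'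
  rw [Nat.not_even_iff_odd] at hodd'
  haveI : Fact p.Prime := ⟨hp⟩
  set a : ℕ := Nat.sqrt p with ha
  have hs_irr : Irrational (Real.sqrt p) := hp.irrational_sqrt
  set s : ℝ := Real.sqrt p with hsdef
  have hsa_ne : s - (a : ℝ) ≠ 0 := sub_ne_zero.mpr (hs_irr.ne_nat a)
  set t : ℝ := (s - a)⁻¹ with htdef
  have ht_irr : Irrational t := by
    apply irrational_inv
    simpa using hs_irr.sub_natCast a
  set bl : List ℝ := L.map (fun n : ℕ => (n : ℝ)) with hbl
  have hbll : bl.length = P := by simp [hbl, hLlen]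
  have hblne : bl ≠ [] := by
    intro h0; rw [h0] at hbll; simp at hbll; omega
  set rep : ℕ → List ℝ := fun m => (List.replicate m bl).flatten with hrep
  have hrep_succ : ∀ m, rep (m + 1) = bl ++ rep m := by
    intro m; simp [hrep, List.replicate_succ]
  have hrep_ne : ∀ m, rep (m + 1) ≠ [] := by
    intro m h0
    rw [hrep_succ] at h0
    exact hblne (List.append_eq_nil_iff.mp h0).1
  have hblock : ∀ m, (List.range (m * P)).map
      (fun j => ((L.getD (j % P) 0 : ℕ) : ℝ)) = rep m := by
    intro m
    induction m with
    | zero => simp [hrep]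
    | succ m ih =>
        have hmp : (m + 1) * P = m * P + P := by ring
        rw [hmp, List.range_add, List.map_append, ih]
        have h2 : (List.map (fun x => m * P + x) (List.range P)).map
            (fun j => ((L.getD (j % P) 0 : ℕ) : ℝ)) = bl := by
          rw [List.map_map]
          apply List.ext_getElem
          · simp [hbl, hLlen]
          · intro n h₁ h₂
            simp only [List.getElem_map, List.getElem_range, Function.comp_apply]
            have hn : n < P := by simpa using h₁
            have hmod : (m * P + n) % P = n := by
              rw [add_comm, Nat.add_mul_mod_self_right, Nat.mod_eq_of_lt hn]
            rw [hmod]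
            have hn' : n < L.length := by omega
            simp [hbl, List.getD_eq_getElem, hn']
        rw [h2]
        have hr : rep (m + 1) = rep m ++ bl := by
          simp [hrep, List.replicate_succ']
        rw [hr]
  have hprefix : ∀ m, ((List.range (m * P + 1)).map (periodicSeq a L)).map
      (fun k : ℕ => (k : ℝ)) = (a : ℝ) :: rep m := by
    intro m
    rw [List.map_map, List.range_succ_eq_map, List.map_cons, List.map_map]
    congr 1
    rw [← hblock m]
    apply List.map_congr_left
    intro j hj
    simp [Function.comp, periodicSeq, hLlen]
  set g : ℕ → ℝ := fun k => cfFinite (rep (k + 1)) with hg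
  have hsub : Filter.Tendsto (fun k : ℕ => (a : ℝ) + (g k)⁻¹)
      Filter.atTop (nhds s) := by
    have hmono : StrictMono (fun k : ℕ => (k + 1) * P) := by
      intro i j hij
      exact (Nat.mul_lt_mul_right hPpos).mpr (by omega)
    have hcomp := hcf.comp hmono.tendsto_atTop
    exact hcomp.congr fun k => by
      simp only [Function.comp_apply]
      rw [hprefix (k + 1), cfFinite_cons _ _ (hrep_ne k)]
  have hinv : Filter.Tendsto (fun k => (g k)⁻¹) Filter.atTop (nhds (s - a)) := by
    have := hsub.sub_const (a : ℝ)
    simpa using this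
  have hgt : Filter.Tendsto g Filter.atTop (nhds t) := by
    have := hinv.inv₀ hsa_ne
    simpa [inv_inv] using this
  obtain ⟨A, B, C, D, hdet, hden, hrepr, hcont⟩ := cfF_moebius t ht_irr L
  rw [hLlen] at hdet
  rw [← hbl] at hrepr hcont
  have hfix : cfF bl t = t := by
    have h1 : Filter.Tendsto (fun k => g (k + 1)) Filter.atTop (nhds t) :=
      hgt.comp (Filter.tendsto_add_atTop_nat 1)
    have h2 : ∀ k, g (k + 1) = cfF bl (g k) := by
      intro k
      show cfFinite (rep (k + 1 + 1)) = _
      rw [hrep_succ (k + 1), cfFinite_append _ _ (hrep_ne k)]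
    have h3 : Filter.Tendsto (fun k => cfF bl (g k)) Filter.atTop
        (nhds (cfF bl t)) := hcont.tendsto.comp hgt
    exact tendsto_nhds_unique h3 (by simpa [h2] using h1)
  rw [hrepr] at hfix
  have h4 : (A : ℝ) * t + B = t * ((C : ℝ) * t + D) := (div_eq_iff hden).mp hfix
  -- arithmetic with s
  have hs2 : s * s = (p : ℝ) := Real.mul_self_sqrt (by positivity)
  have hspos : (0 : ℝ) < s := Real.sqrt_pos.mpr (by exact_mod_cast hp.pos)
  have hsa_pos : (0 : ℝ) < s + a := by positivity
  have he_real : (((p : ℤ) - (a : ℤ) ^ 2 : ℤ) : ℝ) = (s - a) * (s + a) := by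
    push_cast
    linear_combination (-1 : ℝ) * hs2
  have he0R : (((p : ℤ) - (a : ℤ) ^ 2 : ℤ) : ℝ) ≠ 0 := by
    rw [he_real]
    exact mul_ne_zero hsa_ne (by linarith)
  have he0 : ((p : ℤ) - (a : ℤ) ^ 2 : ℤ) ≠ 0 := fun h0 => he0R (by rw [h0]; simp)
  have ht_eq : t * (((p : ℤ) - (a : ℤ) ^ 2 : ℤ) : ℝ) = s + a := by
    rw [htdef, he_real, ← mul_assoc, inv_mul_cancel₀ hsa_ne, one_mul]
  have h5 : (A : ℝ) * (s + a) * (((p : ℤ) - (a : ℤ) ^ 2 : ℤ) : ℝ)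
        + (B : ℝ) * (((p : ℤ) - (a : ℤ) ^ 2 : ℤ) : ℝ) ^ 2
      = (s + a) * ((C : ℝ) * (s + a) + (D : ℝ) * (((p : ℤ) - (a : ℤ) ^ 2 : ℤ) : ℝ)) := by
    linear_combination ((((p : ℤ) - (a : ℤ) ^ 2 : ℤ) : ℝ)) ^ 2 * h4 -
      ((A : ℝ) * (((p : ℤ) - (a : ℤ) ^ 2 : ℤ) : ℝ)
        - (C : ℝ) * (s + a + t * (((p : ℤ) - (a : ℤ) ^ 2 : ℤ) : ℝ))
        - (D : ℝ) * (((p : ℤ) - (a : ℤ) ^ 2 : ℤ) : ℝ)) * ht_eq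
  have hXY : ((C * ((p : ℤ) + (a : ℤ) ^ 2) + (D - A) * a * ((p : ℤ) - (a : ℤ) ^ 2)
        - B * ((p : ℤ) - (a : ℤ) ^ 2) ^ 2 : ℤ) : ℝ)
      + ((2 * (a : ℤ) * C + (D - A) * ((p : ℤ) - (a : ℤ) ^ 2) : ℤ) : ℝ) * s = 0 := by
    push_cast
    push_cast at h5
    linear_combination (-1 : ℝ) * h5 - (C : ℝ) * hs2
  obtain ⟨hX0, hY0⟩ := int_lin_indep hs_irr _ _ hXY
  have h6 : (C - B * ((p : ℤ) - (a : ℤ) ^ 2)) * ((p : ℤ) - (a : ℤ) ^ 2) = 0 := by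
    linear_combination hX0 - (a : ℤ) * hY0
  have hC : C = B * ((p : ℤ) - (a : ℤ) ^ 2) := by
    rcases mul_eq_zero.mp h6 with h7 | h7
    · linarith [h7]
    · exact absurd h7 he0
  have h8 : (D - A + 2 * (a : ℤ) * B) * ((p : ℤ) - (a : ℤ) ^ 2) = 0 := by
    linear_combination hY0 - 2 * (a : ℤ) * hC
  have hD : D = A - 2 * (a : ℤ) * B := by
    rcases mul_eq_zero.mp h8 with h7 | h7
    · linarith [h7]
    · exact absurd h7 he0
  have hPell : (A - (a : ℤ) * B) ^ 2 - (p : ℤ) * B ^ 2 = (-1) ^ P := by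
    rw [hC, hD] at hdet
    linear_combination hdet
  rw [hodd'.neg_one_pow] at hPell
  have hzm : (((A - (a : ℤ) * B : ℤ)) : ZMod p) ^ 2 = -1 := by
    have := congrArg (fun z : ℤ => (z : ZMod p)) hPell
    push_cast at this
    simpa [ZMod.natCast_self] using this
  have hsq : IsSquare (-1 : ZMod p) := ⟨((A - (a : ℤ) * B : ℤ) : ZMod p), by
    rw [← hzm]; ring⟩
  exact (ZMod.exists_sq_eq_neg_one_iff.mp hsq) h
end

section
/- For every integer x₀ ≥ 2, the continued fraction [x₀; 1, x₀-1, 1, 2x₀ repeated] equals √((x₀+1)² - 2). -/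
/-! ### Auxiliary machinery -/

/-- Helper: the "tail" value of a continued fraction. -/
noncomputable def cfHelper : List ℝ → ℝ
  | [] => 0
  | x :: xs => (x + cfHelper xs)⁻¹

lemma cfFinite_cons_s7 (x : ℝ) (xs : List ℝ) : cfFinite (x :: xs) = x + cfHelper xs := by
  induction xs generalizing x with
  | nil => simp [cfFinite, cfHelper]
  | cons y ys ih =>
    show cfFinite (x :: y :: ys) = _
    rw [cfFinite, ih y]
    simp [cfHelper]

lemma convs'Aux_eq :
    ∀ (n : ℕ) (bb : ℕ → ℝ) (s : Stream'.Seq (GenContFract.Pair ℝ)),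
      (∀ k, k < n → s.get? k = some ⟨1, bb k⟩) →
      GenContFract.convs'Aux s n = cfHelper ((List.range n).map bb) := by
  intro n
  induction n with
  | zero => intro bb s _; simp [GenContFract.convs'Aux, cfHelper]
  | succ n ih =>
    intro bb s hs
    have hhead : s.head = some ⟨1, bb 0⟩ := hs 0 (Nat.succ_pos n)
    have htail : GenContFract.convs'Aux s.tail n
        = cfHelper ((List.range n).map (fun k => bb (k + 1))) := by
      apply ih
      intro k hk
      rw [Stream'.Seq.get?_tail]
      exact hs (k + 1) (by omega)
    rw [List.range_succ_eq_map, List.map_cons, List.map_map]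
    show GenContFract.convs'Aux s (n + 1) = cfHelper (bb 0 :: _)
    rw [GenContFract.convs'Aux, hhead]
    simp only [cfHelper, htail]
    rw [one_div]
    rfl

/-- The integer parts in the continued fraction expansion of √((x₀+1)²-2). -/
def Bfun (x₀ : ℕ) : ℕ → ℤ := fun n =>
  if n = 0 then (x₀ : ℤ)
  else if n % 4 = 1 then 1
  else if n % 4 = 2 then (x₀ : ℤ) - 1
  else if n % 4 = 3 then 1
  else 2 * (x₀ : ℤ)

/-- The fractional parts in the continued fraction expansion of √((x₀+1)²-2). -/
noncomputable def Ffun (X v : ℝ) : ℕ → ℝ := fun n =>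
  if n % 4 = 0 then v - X
  else if n % 4 = 1 then (v - X + 1) / (2 * X - 1)
  else if n % 4 = 2 then (v - X + 1) / 2
  else (v - X) / (2 * X - 1)

theorem cf_value_sqrt (x₀ : ℕ) (h : 2 ≤ x₀) :
    IsPeriodicCF x₀ [1, x₀ - 1, 1, 2 * x₀]
      (Real.sqrt (((x₀ + 1) ^ 2 - 2 : ℕ))) := by
  set X : ℝ := (x₀ : ℝ) with hXdef
  have hX : (2 : ℝ) ≤ X := by rw [hXdef]; exact_mod_cast h
  have hDcast : (((x₀ + 1) ^ 2 - 2 : ℕ) : ℝ) = X ^ 2 + 2 * X - 1 := by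
    have h2 : 2 ≤ (x₀ + 1) ^ 2 := by nlinarith
    push_cast [Nat.cast_sub h2]
    ring
  set v : ℝ := Real.sqrt (((x₀ + 1) ^ 2 - 2 : ℕ)) with hvdef
  have hv0 : 0 ≤ v := Real.sqrt_nonneg _
  have hvsq : v ^ 2 = X ^ 2 + 2 * X - 1 := by
    rw [hvdef, Real.sq_sqrt (by positivity), hDcast]
  have h1 : X < v := by nlinarith
  have h2 : v < X + 1 := by nlinarith
  have hhalf : X + 1/2 < v := by nlinarith
  have hden : (0 : ℝ) < 2 * X - 1 := by linarith
  have hden0 : X * 2 - 1 ≠ 0 := by linarith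
  have hne1 : v - X ≠ 0 := by linarith
  have hne2 : v - X + 1 ≠ 0 := by linarith
  -- the four one-step computations
  have step0 : GenContFract.IntFractPair.of (v - X)⁻¹
      = ⟨1, (v - X + 1) / (2 * X - 1)⟩ := by
    have hy : (v - X)⁻¹ = (v + X) / (2 * X - 1) := by
      field_simp
      linear_combination -hvsq
    have hfl : ⌊(v + X) / (2 * X - 1)⌋ = (1 : ℤ) := by
      rw [Int.floor_eq_iff]
      constructor
      · rw [le_div_iff₀ hden]; push_cast; nlinarith
      · rw [div_lt_iff₀ hden]; push_cast; nlinarith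
    have hfr : Int.fract ((v + X) / (2 * X - 1)) = (v - X + 1) / (2 * X - 1) := by
      rw [Int.fract, hfl]
      push_cast
      field_simp
      ring
    rw [GenContFract.IntFractPair.of, hy, hfl, hfr]
  have step1 : GenContFract.IntFractPair.of ((v - X + 1) / (2 * X - 1))⁻¹
      = ⟨(x₀ : ℤ) - 1, (v - X + 1) / 2⟩ := by
    have hy : ((v - X + 1) / (2 * X - 1))⁻¹ = (v + X - 1) / 2 := by
      rw [inv_div]
      field_simp
      linear_combination -hvsq
    have hfl : ⌊(v + X - 1) / 2⌋ = (x₀ : ℤ) - 1 := by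
      rw [Int.floor_eq_iff]
      constructor
      · rw [le_div_iff₀ (by norm_num : (0:ℝ) < 2)]; push_cast; linarith
      · rw [div_lt_iff₀ (by norm_num : (0:ℝ) < 2)]; push_cast; linarith
    have hfr : Int.fract ((v + X - 1) / 2) = (v - X + 1) / 2 := by
      rw [Int.fract, hfl]
      push_cast
      field_simp
      ring
    rw [GenContFract.IntFractPair.of, hy, hfl, hfr]
  have step2 : GenContFract.IntFractPair.of ((v - X + 1) / 2)⁻¹
      = ⟨1, (v - X) / (2 * X - 1)⟩ := by
    have hy : ((v - X + 1) / 2)⁻¹ = (v + X - 1) / (2 * X - 1) := by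
      rw [inv_div]
      field_simp
      linear_combination -hvsq
    have hfl : ⌊(v + X - 1) / (2 * X - 1)⌋ = (1 : ℤ) := by
      rw [Int.floor_eq_iff]
      constructor
      · rw [le_div_iff₀ hden]; push_cast; linarith
      · rw [div_lt_iff₀ hden]; push_cast; linarith
    have hfr : Int.fract ((v + X - 1) / (2 * X - 1)) = (v - X) / (2 * X - 1) := by
      rw [Int.fract, hfl]
      push_cast
      field_simp
      ring
    rw [GenContFract.IntFractPair.of, hy, hfl, hfr]
  have step3 : GenContFract.IntFractPair.of ((v - X) / (2 * X - 1))⁻¹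
      = ⟨2 * (x₀ : ℤ), v - X⟩ := by
    have hy : ((v - X) / (2 * X - 1))⁻¹ = v + X := by
      rw [inv_div]
      field_simp
      linear_combination -hvsq
    have hfl : ⌊v + X⌋ = 2 * (x₀ : ℤ) := by
      rw [Int.floor_eq_iff]
      constructor
      · push_cast; linarith
      · push_cast; linarith
    have hfr : Int.fract (v + X) = v - X := by
      rw [Int.fract, hfl]
      push_cast
      ring
    rw [GenContFract.IntFractPair.of, hy, hfl, hfr]
  -- nonvanishing of the fractional parts
  have hFne : ∀ n, Ffun X v n ≠ 0 := by
    intro n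
    unfold Ffun
    split_ifs <;> positivity
  -- the stream computation
  have hstream : ∀ n, GenContFract.IntFractPair.stream v n
      = some ⟨Bfun x₀ n, Ffun X v n⟩ := by
    intro n
    induction n with
    | zero =>
      rw [GenContFract.IntFractPair.stream_zero, GenContFract.IntFractPair.of]
      have hfl : ⌊v⌋ = (x₀ : ℤ) := by
        rw [Int.floor_eq_iff]
        constructor
        · push_cast; linarith
        · push_cast; linarith
      simp [Bfun, Ffun, Int.fract, hfl, hXdef]
    | succ n ih =>
      have hs := GenContFract.IntFractPair.stream_succ_of_some ih (hFne n)
      rw [hs]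
      have h4 : n % 4 = 0 ∨ n % 4 = 1 ∨ n % 4 = 2 ∨ n % 4 = 3 := by omega
      rcases h4 with h4 | h4 | h4 | h4
      · have hF : Ffun X v n = v - X := by simp [Ffun, h4]
        have hm : (n + 1) % 4 = 1 := by omega
        rw [hF, step0]
        simp [Bfun, Ffun, hm]
      · have hF : Ffun X v n = (v - X + 1) / (2 * X - 1) := by simp [Ffun, h4]
        have hm : (n + 1) % 4 = 2 := by omega
        rw [hF, step1]
        simp [Bfun, Ffun, hm]
      · have hF : Ffun X v n = (v - X + 1) / 2 := by simp [Ffun, h4]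
        have hm : (n + 1) % 4 = 3 := by omega
        rw [hF, step2]
        simp [Bfun, Ffun, hm]
      · have hF : Ffun X v n = (v - X) / (2 * X - 1) := by simp [Ffun, h4]
        have hm : (n + 1) % 4 = 0 := by omega
        rw [hF, step3]
        simp [Bfun, Ffun, hm, Nat.succ_ne_zero]
  -- the sequence of the computed continued fraction
  have hseq : ∀ k, (GenContFract.of v).s.get? k
      = some ⟨1, ((Bfun x₀ (k + 1) : ℤ) : ℝ)⟩ := by
    intro k
    exact GenContFract.get?_of_eq_some_of_succ_get?_intFractPair_stream (hstream (k + 1))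
  -- identify the list entries
  set a : ℕ → ℕ := periodicSeq x₀ [1, x₀ - 1, 1, 2 * x₀] with hadef
  have hbb : ∀ k, ((a (k + 1) : ℕ) : ℝ) = ((Bfun x₀ (k + 1) : ℤ) : ℝ) := by
    intro k
    have ha : a (k + 1) = ([1, x₀ - 1, 1, 2 * x₀] : List ℕ).getD (k % 4) 0 := by
      rw [hadef]; rfl
    have h4 : k % 4 = 0 ∨ k % 4 = 1 ∨ k % 4 = 2 ∨ k % 4 = 3 := by omega
    rcases h4 with h4 | h4 | h4 | h4
    · have hm : (k + 1) % 4 = 1 := by omega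
      rw [ha, h4]
      simp [Bfun, hm]
    · have hm : (k + 1) % 4 = 2 := by omega
      rw [ha, h4]
      simp only [Bfun, hm, List.getD]
      norm_num
      rw [Nat.cast_sub (by omega)]
      push_cast
      ring
    · have hm : (k + 1) % 4 = 3 := by omega
      rw [ha, h4]
      simp [Bfun, hm]
    · have hm : (k + 1) % 4 = 0 := by omega
      rw [ha, h4]
      simp [Bfun, hm]
  -- positivity of the partial denominators
  have hBpos : ∀ k, (1 : ℝ) ≤ ((Bfun x₀ (k + 1) : ℤ) : ℝ) := by
    intro k
    have h1' : (1 : ℤ) ≤ Bfun x₀ (k + 1) := by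
      unfold Bfun
      split_ifs <;> omega
    exact_mod_cast h1'
  -- convergents coincide with the finite continued fractions
  have hkey : ∀ n, (GenContFract.of v).convs n
      = cfFinite (((List.range (n + 1)).map a).map (fun k : ℕ => (k : ℝ))) := by
    intro n
    have hcc : (GenContFract.of v).convs n = (GenContFract.of v).convs' n := by
      apply GenContFract.convs_eq_convs'
      intro gp m _ hget
      rw [hseq m] at hget
      injection hget with hget
      rw [← hget]
      exact ⟨zero_lt_one, lt_of_lt_of_le zero_lt_one (hBpos m)⟩
    have hs' : GenContFract.convs'Aux (GenContFract.of v).s n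
        = cfHelper ((List.range n).map (fun k => ((a (k + 1) : ℕ) : ℝ))) := by
      apply convs'Aux_eq
      intro k _
      rw [hbb k]
      exact hseq k
    rw [hcc, GenContFract.convs', hs']
    rw [List.map_map, List.range_succ_eq_map, List.map_cons, cfFinite_cons_s7, List.map_map]
    have hfl0 : ⌊v⌋ = (x₀ : ℤ) := by
      rw [Int.floor_eq_iff]
      constructor
      · push_cast; linarith
      · push_cast; linarith
    rw [GenContFract.of_h_eq_floor, hfl0]
    have ha0 : a 0 = x₀ := rfl
    have hfun : ((fun k : ℕ => (k : ℝ)) ∘ a) ∘ Nat.succ = fun k => ((a (k + 1) : ℕ) : ℝ) := rfl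
    rw [hfun]
    simp only [Function.comp_apply, ha0]
    push_cast
    ring
  exact Filter.Tendsto.congr hkey (GenContFract.of_convergence v)
end

section
/- If x₀, x₁, x₂ are positive integers satisfying 2x₀ = m(x₁²x₂ + 2x₁) - x₂(x₁x₂ + 1) for some positive integer m, then √(x₀² + m(x₁x₂ + 1) - x₂²) has the periodic continued fraction expansion [x₀; x₁, x₂, x₁, 2x₀ repeated]. -/
lemma cfFinite_fold (L : List ℝ) (u z : ℝ) :
    cfFinite (L ++ [u, z]) = cfFinite (L ++ [u + z⁻¹]) := by
  induction L with
  | nil => simp [cfFinite]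
  | cons x L ih =>
      rw [List.cons_append, List.cons_append,
        cfFinite_cons _ _ (by simp), cfFinite_cons _ _ (by simp), ih]

/-- numerator continuants -/
noncomputable def contA (a : ℕ → ℕ) : ℕ → ℝ
  | 0 => 1
  | 1 => a 0
  | (n+2) => a (n+1) * contA a (n+1) + contA a n

/-- denominator continuants -/
noncomputable def contB (a : ℕ → ℕ) : ℕ → ℝ
  | 0 => 0
  | 1 => 1
  | (n+2) => a (n+1) * contB a (n+1) + contB a n

variable {a : ℕ → ℕ}

lemma contB_nonneg_pos (hA : ∀ n, 1 ≤ a (n+1)) :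
    ∀ n, 0 ≤ contB a n ∧ 1 ≤ contB a (n+1) := by
  intro n
  induction n with
  | zero => simp [contB]
  | succ n ih =>
      refine ⟨le_trans zero_le_one ih.2, ?_⟩
      show (1:ℝ) ≤ a (n+1) * contB a (n+1) + contB a n
      have h1 : (1:ℝ) ≤ (a (n+1) : ℝ) := by exact_mod_cast hA n
      nlinarith [ih.1, ih.2]

lemma contB_growth (hA : ∀ n, 1 ≤ a (n+1)) :
    ∀ n : ℕ, (n : ℝ) ≤ 2 * contB a (n+1) ∧ ((n:ℝ) + 1) ≤ 2 * contB a (n+2) := by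
  intro n
  induction n with
  | zero =>
      constructor
      · simp [contB]
      · have h1 : (1:ℝ) ≤ (a 1 : ℝ) := by exact_mod_cast hA 0
        have : contB a (0+2) = a 1 * contB a 1 + contB a 0 := rfl
        rw [this]; simp [contB]; nlinarith
  | succ n ih =>
      refine ⟨by exact_mod_cast ih.2, ?_⟩
      have hrw : contB a (n+1+2) = a (n+2) * contB a (n+2) + contB a (n+1) := rfl
      rw [hrw]
      push_cast
      have h1 : (1:ℝ) ≤ (a (n+2) : ℝ) := by exact_mod_cast hA (n+1)
      have h2 := (contB_nonneg_pos hA n).2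
      have h3 := (contB_nonneg_pos hA (n+1)).2
      nlinarith [ih.2]

lemma cont_det : ∀ n, contA a (n+1) * contB a n - contA a n * contB a (n+1) = (-1)^(n+1)
  | 0 => by simp [contA, contB]
  | (n+1) => by
      have ih := cont_det n
      show (a (n+1) * contA a (n+1) + contA a n) * contB a (n+1)
          - contA a (n+1) * (a (n+1) * contB a (n+1) + contB a n) = (-1)^(n+2)
      have : (-1:ℝ)^(n+2) = -((-1)^(n+1)) := by ring
      rw [this, ← ih]; ring

lemma cfFinite_eval (hA : ∀ n, 1 ≤ a (n+1)) :
    ∀ n (z : ℝ), 0 < z →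
      cfFinite (((List.range (n+1)).map fun k => ((a k : ℕ) : ℝ)) ++ [z])
        = (z * contA a (n+1) + contA a n) / (z * contB a (n+1) + contB a n) := by
  intro n
  induction n with
  | zero =>
      intro z hz
      show cfFinite [(a 0 : ℝ), z] = _
      have : cfFinite [(a 0 : ℝ), z] = (a 0 : ℝ) + z⁻¹ := rfl
      rw [this]
      simp only [contA, contB]
      field_simp
      ring
  | succ n ih =>
      intro z hz
      have hsplit : ((List.range (n+2)).map fun k => ((a k : ℕ) : ℝ)) ++ [z]
          = ((List.range (n+1)).map fun k => ((a k : ℕ) : ℝ)) ++ [((a (n+1) : ℕ) : ℝ), z] := by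
        rw [List.range_succ (n := n+1), List.map_append]
        simp
      rw [hsplit, cfFinite_fold]
      have ha1 : (1:ℝ) ≤ (a (n+1) : ℝ) := by exact_mod_cast hA n
      have hw : 0 < (a (n+1) : ℝ) + z⁻¹ := by positivity
      rw [ih _ hw]
      have hB0 := (contB_nonneg_pos hA n).1
      have hB1 := (contB_nonneg_pos hA n).2
      have hB2 := (contB_nonneg_pos hA (n+1)).2
      have hd1 : 0 < ((a (n+1) : ℝ) + z⁻¹) * contB a (n+1) + contB a n := by
        have : 0 < ((a (n+1) : ℝ) + z⁻¹) * contB a (n+1) := by positivity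
        linarith
      have hd2 : 0 < z * contB a (n+2) + contB a (n+1) := by
        have : 0 < z * contB a (n+2) := by
          apply mul_pos hz; linarith
        linarith
      rw [div_eq_div_iff (ne_of_gt hd1) (ne_of_gt hd2)]
      show (((a (n+1) : ℝ) + z⁻¹) * contA a (n+1) + contA a n) * (z * (a (n+1) * contB a (n+1) + contB a n) + contB a (n+1))
        = (z * (a (n+1) * contA a (n+1) + contA a n) + contA a (n+1)) * ((((a (n+1) : ℝ)) + z⁻¹) * contB a (n+1) + contB a n)
      field_simp
      ring
lemma cfFinite_tail_eval (t : ℕ → ℝ)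
    (hT : ∀ n, 1 ≤ t (n+1))
    (hrec : ∀ n, t n = a n + (t (n+1))⁻¹) :
    ∀ n, cfFinite (((List.range (n+1)).map fun k => ((a k : ℕ) : ℝ)) ++ [t (n+1)]) = t 0 := by
  intro n
  induction n with
  | zero =>
      show cfFinite [(a 0 : ℝ), t 1] = t 0
      have : cfFinite [(a 0 : ℝ), t 1] = (a 0 : ℝ) + (t 1)⁻¹ := rfl
      rw [this, ← hrec 0]
  | succ n ih =>
      have hsplit : ((List.range (n+2)).map fun k => ((a k : ℕ) : ℝ)) ++ [t (n+2)]
          = ((List.range (n+1)).map fun k => ((a k : ℕ) : ℝ)) ++ [((a (n+1) : ℕ) : ℝ), t (n+2)] := by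
        rw [List.range_succ (n := n+1), List.map_append]; simp
      rw [hsplit, cfFinite_fold, ← hrec (n+1), ih]

lemma cfValue_of_tails (a : ℕ → ℕ) (t : ℕ → ℝ)
    (hA : ∀ n, 1 ≤ a (n+1))
    (hT : ∀ n, 1 ≤ t (n+1))
    (hrec : ∀ n, t n = a n + (t (n+1))⁻¹) :
    cfValue a (t 0) := by
  have key : ∀ n : ℕ, |cfFinite (((List.range (n+2)).map a).map (fun k : ℕ => (k : ℝ))) - t 0|
      ≤ 2 / (n+1 : ℝ) := by
    intro n
    have hmm : (((List.range (n+2)).map a).map (fun k : ℕ => (k : ℝ)))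
        = ((List.range (n+1)).map fun k => ((a k : ℕ) : ℝ)) ++ [((a (n+1) : ℕ) : ℝ)] := by
      rw [List.map_map, List.range_succ (n := n+1), List.map_append]; simp
    have ha1 : (1:ℝ) ≤ (a (n+1) : ℝ) := by exact_mod_cast hA n
    have hc : cfFinite (((List.range (n+2)).map a).map (fun k : ℕ => (k : ℝ)))
        = ((a (n+1) : ℝ) * contA a (n+1) + contA a n)
          / ((a (n+1) : ℝ) * contB a (n+1) + contB a n) := by
      rw [hmm]; exact cfFinite_eval hA n _ (by linarith)
    have ht0 : t 0 = (t (n+1) * contA a (n+1) + contA a n)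
          / (t (n+1) * contB a (n+1) + contB a n) := by
      rw [← cfFinite_tail_eval (a := a) t hT hrec n,
        cfFinite_eval hA n _ (by linarith [hT n])]
    have hB0 := (contB_nonneg_pos hA n).1
    have hB1 := (contB_nonneg_pos hA n).2
    have hB2 := (contB_nonneg_pos hA (n+1)).2
    have htn := hT n
    have hd1 : 0 < (a (n+1) : ℝ) * contB a (n+1) + contB a n := by nlinarith
    have hd2 : 0 < t (n+1) * contB a (n+1) + contB a n := by nlinarith
    have hdet := cont_det (a := a) n
    -- difference formula
    have hdiff : cfFinite (((List.range (n+2)).map a).map (fun k : ℕ => (k : ℝ))) - t 0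
        = ((-1)^(n+1) * ((a (n+1) : ℝ) - t (n+1)))
          / (((a (n+1) : ℝ) * contB a (n+1) + contB a n) * (t (n+1) * contB a (n+1) + contB a n)) := by
      rw [hc, ht0, div_sub_div _ _ (ne_of_gt hd1) (ne_of_gt hd2)]
      rw [div_eq_div_iff (by positivity) (by positivity)]
      linear_combination (((a (n+1) : ℝ) - t (n+1)) * (((a (n+1) : ℝ) * contB a (n+1) + contB a n) * (t (n+1) * contB a (n+1) + contB a n))) * hdet
    rw [hdiff, abs_div]
    have hnum : |(-1:ℝ)^(n+1) * ((a (n+1) : ℝ) - t (n+1))| ≤ 1 := by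
      rw [abs_mul, abs_pow, abs_neg, abs_one, one_pow, one_mul, abs_le]
      have := hrec (n+1)
      have h2 := hT (n+1)
      have hinv1 : (t (n+2))⁻¹ ≤ 1 := by
        rw [inv_le_one_iff₀]; right; exact hT (n+1)
      have hinv0 : 0 < (t (n+2))⁻¹ := by
        have := hT (n+1); positivity
      constructor <;> nlinarith [hrec (n+1), hT (n+1)]
    have hgrow := (contB_growth hA n).1
    have hden : (n+1:ℝ)/2 ≤ ((a (n+1) : ℝ) * contB a (n+1) + contB a n) * (t (n+1) * contB a (n+1) + contB a n) := by
      have h1 : contB a (n+1) ≤ (a (n+1) : ℝ) * contB a (n+1) + contB a n := by nlinarith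
      have h2 : (1:ℝ) ≤ t (n+1) * contB a (n+1) + contB a n := by nlinarith
      have hgrow2 := (contB_growth hA n).2
      have hrwB : contB a (n+2) = (a (n+1) : ℝ) * contB a (n+1) + contB a n := rfl
      rw [hrwB] at hgrow2
      nlinarith
    have habs : |((a (n+1) : ℝ) * contB a (n+1) + contB a n) * (t (n+1) * contB a (n+1) + contB a n)|
        = ((a (n+1) : ℝ) * contB a (n+1) + contB a n) * (t (n+1) * contB a (n+1) + contB a n) := by
      exact abs_of_pos (by positivity)
    rw [habs]
    have hposn : (0:ℝ) < (n+1:ℝ)/2 := by positivity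
    have hb : |(-1:ℝ)^(n+1) * ((a (n+1) : ℝ) - t (n+1))|
        / (((a (n+1) : ℝ) * contB a (n+1) + contB a n) * (t (n+1) * contB a (n+1) + contB a n))
        ≤ 1 / ((n+1:ℝ)/2) := div_le_div₀ zero_le_one hnum hposn hden
    rw [one_div_div] at hb
    exact hb
  -- now conclude the limit
  rw [cfValue]
  rw [tendsto_iff_dist_tendsto_zero]
  apply squeeze_zero' (g := fun n : ℕ => 2 / (n : ℝ)) (Filter.Eventually.of_forall fun n => dist_nonneg)
  · filter_upwards [Filter.eventually_ge_atTop 1] with n hn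
    obtain ⟨k, rfl⟩ := Nat.exists_eq_add_of_le hn
    have := key k
    rw [Real.dist_eq]
    calc |cfFinite (((List.range (1 + k + 1)).map a).map (fun j : ℕ => (j : ℝ))) - t 0|
        = |cfFinite (((List.range (k + 2)).map a).map (fun j : ℕ => (j : ℝ))) - t 0| := by
          rw [show 1 + k + 1 = k + 2 by omega]
      _ ≤ 2 / (k + 1 : ℝ) := key k
      _ ≤ 2 / ((1 + k : ℕ) : ℝ) := by
          push_cast
          apply div_le_div_of_nonneg_left (by norm_num) (by positivity) (by linarith)
  · have h := tendsto_const_div_atTop_nhds_zero_nat (𝕜 := ℝ) 2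
    exact h.comp (Filter.tendsto_atTop_atTop_of_monotone (fun i j hij => hij) (fun b => ⟨b, le_refl b⟩))

lemma surd_step (α P Q aa P' Q' : ℝ) (hQ : 0 < Q) (hQ' : 0 < Q') (hden : 0 < α + P')
    (hP' : P' = aa * Q - P) (hQQ : Q * Q' = α^2 - P'^2) :
    (α + P) / Q = aa + ((α + P') / Q')⁻¹ := by
  have h1 : ((α + P')/Q')⁻¹ = (α - P')/Q := by
    rw [inv_div, div_eq_div_iff (ne_of_gt hden) (ne_of_gt hQ)]
    linear_combination hQQ
  rw [h1, hP']
  field_simp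
  ring

set_option maxHeartbeats 2000000 in
theorem cf_value_period_four (m x₀ x₁ x₂ : ℕ)
    (hm : 0 < m) (h0 : 0 < x₀) (h1 : 0 < x₁) (h2 : 0 < x₂)
    (heq : 2 * x₀ = m * (x₁ ^ 2 * x₂ + 2 * x₁) - x₂ * (x₁ * x₂ + 1))
    (heq' : x₂ * (x₁ * x₂ + 1) ≤ m * (x₁ ^ 2 * x₂ + 2 * x₁))
    (hpos : x₂ ^ 2 < x₀ ^ 2 + m * (x₁ * x₂ + 1))
    (hns : ¬ IsSquare (x₀ ^ 2 + m * (x₁ * x₂ + 1) - x₂ ^ 2)) :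
    IsPeriodicCF x₀ [x₁, x₂, x₁, 2 * x₀]
      (Real.sqrt ((x₀ ^ 2 + m * (x₁ * x₂ + 1) - x₂ ^ 2 : ℕ))) := by
  have hle : x₂ ^ 2 ≤ x₀ ^ 2 + m * (x₁ * x₂ + 1) := le_of_lt hpos
  -- integer data
  have heqZ : (2*x₀ : ℤ) = (m:ℤ) * (x₁^2*x₂ + 2*x₁) - x₂*(x₁*x₂+1) := by
    have h := congrArg (fun n : ℕ => (n : ℤ)) heq
    rw [Nat.cast_sub heq'] at h
    push_cast at h
    linarith
  set zq1 : ℤ := (m:ℤ)*(x₁*x₂+1) - x₂^2 with hzq1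
  set zq2 : ℤ := (m:ℤ)*x₁^2 - x₁*x₂ + 1 with hzq2
  set zp2 : ℤ := (x₁:ℤ)*zq1 - x₀ with hzp2
  set zD : ℤ := (x₀:ℤ)^2 + zq1 with hzD
  have hm1 : (1:ℤ) ≤ m := by exact_mod_cast hm
  have h01 : (1:ℤ) ≤ x₀ := by exact_mod_cast h0
  have h11 : (1:ℤ) ≤ x₁ := by exact_mod_cast h1
  have h21 : (1:ℤ) ≤ x₂ := by exact_mod_cast h2
  have hekey : 2*(x₀:ℤ) = (x₁:ℤ)*zq1 + (m:ℤ)*x₁ - x₂ := by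
    rw [hzq1]; linear_combination heqZ
  have f1 : 0 < zq1 := by
    by_contra hcon
    push_neg at hcon
    have hzq1' : (m:ℤ)*(x₁*x₂+1) - x₂^2 ≤ 0 := by rw [← hzq1]; exact hcon
    have hx2big : ¬ ((x₂:ℤ) ≤ (m:ℤ)*x₁) := by
      intro hx
      nlinarith [mul_le_mul_of_nonneg_right hx (by linarith : (0:ℤ) ≤ (x₂:ℤ))]
    push_neg at hx2big
    have hx2big' : (m:ℤ)*x₁ + 1 ≤ x₂ := hx2big
    have hmul : (x₁:ℤ)*zq1 ≤ 0 := mul_nonpos_of_nonneg_of_nonpos (by linarith) hcon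
    linarith [hekey]
  have f2 : 2*zp2 = (x₂:ℤ)*zq2 := by
    rw [hzp2, hzq2, hzq1]; linear_combination -heqZ
  have f3 : zq1*zq2 = zD - zp2^2 := by
    rw [hzD, hzp2, hzq2, hzq1]
    linear_combination (-(x₁:ℤ)*((m:ℤ)*(x₁*x₂+1) - x₂^2)) * heqZ
  have f4 : 0 < zq2 := by
    by_contra hcon
    push_neg at hcon
    have hp2 : zp2 ≤ 0 := by nlinarith [mul_nonpos_of_nonneg_of_nonpos (by linarith : (0:ℤ) ≤ x₂) hcon]
    have hp2' : -(x₀:ℤ) ≤ zp2 := by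
      have : 0 ≤ (x₁:ℤ)*zq1 := mul_nonneg (by linarith) (le_of_lt f1)
      rw [hzp2]; linarith
    have hsq : zp2^2 ≤ (x₀:ℤ)^2 := by nlinarith [mul_nonneg (by linarith : (0:ℤ) ≤ x₀ + zp2) (by linarith : (0:ℤ) ≤ x₀ - zp2)]
    have : zq1*zq2 ≤ 0 := mul_nonpos_of_nonneg_of_nonpos (le_of_lt f1) hcon
    rw [f3, hzD] at this
    linarith [hsq]
  have f4' : (0:ℤ) < (m:ℤ)*x₁^2 - x₁*x₂ + 1 := by rw [← hzq2]; exact f4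
  have f5 : (x₂:ℤ) ≤ (m:ℤ)*x₁ := by
    by_contra hx
    push_neg at hx
    have hx' : (m:ℤ)*x₁ + 1 ≤ x₂ := hx
    nlinarith [mul_le_mul_of_nonneg_left hx' (by linarith : (0:ℤ) ≤ (x₁:ℤ))]
  have f6 : zq1 ≤ 2*x₀ := by
    rw [hzq1]
    nlinarith [mul_nonneg (mul_nonneg (by linarith : (0:ℤ) ≤ x₂) (by linarith : (0:ℤ) ≤ (x₁:ℤ) - 1)) (by linarith : (0:ℤ) ≤ (m:ℤ)*x₁ - x₂), heqZ, mul_nonneg (by linarith : (0:ℤ) ≤ (m:ℤ)) (by linarith : (0:ℤ) ≤ (x₁:ℤ) - 1)]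
  have f7 : 0 < zp2 := by nlinarith [f2, mul_pos (by linarith : (0:ℤ) < (x₂:ℤ)) f4]
  have f8 : (zq1 - x₀)^2 < zD := by
    rw [hzD]; nlinarith [mul_pos f1 (by linarith : (0:ℤ) < 1 + 2*x₀ - zq1)]
  have f2q : 2*zp2*zq2 = (x₂:ℤ)*zq2^2 := by linear_combination zq2 * f2
  have f9 : (zq2 - zp2)^2 < zD := by
    nlinarith [f3, f2q, mul_pos f1 f4, mul_nonneg (by linarith : (0:ℤ) ≤ (x₂:ℤ) - 1) (sq_nonneg zq2)]
  have key10 : 1 ≤ zq2 + 2*zp2 - zq1 := by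
    have hid : zq2 + 2*zp2 - zq1 = ((x₁:ℤ)-1)*((m:ℤ)*x₁ - x₂) + ((x₁:ℤ)-1)*zq1 + 1 := by
      rw [hzq2, hzp2, hzq1]; linear_combination -heqZ
    rw [hid]
    have := mul_nonneg (by linarith : (0:ℤ) ≤ (x₁:ℤ)-1) (by linarith : (0:ℤ) ≤ (m:ℤ)*x₁ - x₂)
    have := mul_nonneg (by linarith : (0:ℤ) ≤ (x₁:ℤ)-1) (le_of_lt f1)
    linarith
  have f10 : (zq1 - zp2)^2 < zD := by
    nlinarith [f3, mul_le_mul_of_nonneg_left key10 (le_of_lt f1)]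
  -- real data
  set q1 : ℝ := ((zq1 : ℤ) : ℝ) with hq1
  set q2 : ℝ := ((zq2 : ℤ) : ℝ) with hq2
  set p2 : ℝ := ((zp2 : ℤ) : ℝ) with hp2
  set α : ℝ := Real.sqrt ((x₀ ^ 2 + m * (x₁ * x₂ + 1) - x₂ ^ 2 : ℕ) : ℝ) with hαdef
  have hDcast : ((x₀ ^ 2 + m * (x₁ * x₂ + 1) - x₂ ^ 2 : ℕ) : ℝ) = ((zD : ℤ) : ℝ) := by
    rw [Nat.cast_sub hle, hzD, hzq1]; push_cast; ring
  have hzDpos : (0:ℤ) < zD := by rw [hzD]; nlinarith [f1]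
  have hα2 : α^2 = (x₀:ℝ)^2 + q1 := by
    rw [hαdef, Real.sq_sqrt (by rw [hDcast]; exact_mod_cast le_of_lt hzDpos), hDcast, hzD]
    push_cast; ring
  have hαpos : 0 < α := by
    rw [hαdef]; apply Real.sqrt_pos.mpr; rw [hDcast]; exact_mod_cast hzDpos
  have hq1pos : (0:ℝ) < q1 := by rw [hq1]; exact_mod_cast f1
  have hq2pos : (0:ℝ) < q2 := by rw [hq2]; exact_mod_cast f4
  have hp2pos : (0:ℝ) < p2 := by rw [hp2]; exact_mod_cast f7
  have hx0pos : (0:ℝ) < (x₀:ℝ) := by exact_mod_cast h0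
  have hp2def : p2 = (x₁:ℝ)*q1 - x₀ := by rw [hp2, hzp2]; push_cast; ring
  have h2p2 : 2*p2 = (x₂:ℝ)*q2 := by rw [hp2, hq2]; exact_mod_cast f2
  have hQQ12 : q1*q2 = α^2 - p2^2 := by
    rw [hα2]
    have : (zq1*zq2 : ℝ) = ((zD:ℤ):ℝ) - (zp2:ℝ)^2 := by exact_mod_cast congrArg (fun z : ℤ => (z:ℝ)) f3
    push_cast at this
    rw [hq1, hq2, hp2]
    rw [hzD] at this; push_cast at this; linarith
  have hQ1D : (1:ℝ)*q1 = α^2 - (x₀:ℝ)^2 := by rw [hα2]; ring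
  -- square-root comparison facts
  have sqrt_gt : ∀ c : ℤ, c^2 < zD → (c:ℝ) < α := by
    intro c hc
    have hcR : ((c:ℤ):ℝ)^2 < α^2 := by
      rw [hα2]
      have : ((c^2 : ℤ) : ℝ) < ((zD:ℤ):ℝ) := by exact_mod_cast hc
      rw [hzD] at this; push_cast at this; push_cast; linarith
    nlinarith [hαpos, hcR]
  have g8 : q1 - x₀ < α := by
    have := sqrt_gt (zq1 - x₀) f8
    push_cast at this; rw [hq1]; linarith
  have g9 : q2 - p2 < α := by
    have := sqrt_gt (zq2 - zp2) f9
    push_cast at this; rw [hq2, hp2]; linarith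
  have g10 : q1 - p2 < α := by
    have := sqrt_gt (zq1 - zp2) f10
    push_cast at this; rw [hq1, hp2]; linarith
  -- the tails
  set t : ℕ → ℝ := fun n => if n = 0 then α else
    if (n-1) % 4 = 0 then (α + x₀)/q1 else
    if (n-1) % 4 = 1 then (α + p2)/q2 else
    if (n-1) % 4 = 2 then (α + p2)/q1 else α + x₀ with ht
  set a : ℕ → ℕ := periodicSeq x₀ [x₁, x₂, x₁, 2*x₀] with ha
  have haval : ∀ n, a (n+1) = [x₁, x₂, x₁, 2*x₀].getD (n % 4) 0 := by
    intro n; rw [ha]; rfl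
  have hA : ∀ n, 1 ≤ a (n+1) := by
    intro n
    rw [haval]
    have : n % 4 = 0 ∨ n % 4 = 1 ∨ n % 4 = 2 ∨ n % 4 = 3 := by omega
    rcases this with h | h | h | h <;> simp [h] <;> omega
  have hv0 : ∀ n : ℕ, n % 4 = 0 → t (n+1) = (α + ↑x₀)/q1 := by
    intro n h
    show (if n+1 = 0 then α else if (n+1-1) % 4 = 0 then (α + ↑x₀)/q1 else
      if (n+1-1) % 4 = 1 then (α + p2)/q2 else
      if (n+1-1) % 4 = 2 then (α + p2)/q1 else α + ↑x₀) = (α + ↑x₀)/q1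
    simp only [Nat.add_sub_cancel, h]
    norm_num
  have hv1 : ∀ n : ℕ, n % 4 = 1 → t (n+1) = (α + p2)/q2 := by
    intro n h
    show (if n+1 = 0 then α else if (n+1-1) % 4 = 0 then (α + ↑x₀)/q1 else
      if (n+1-1) % 4 = 1 then (α + p2)/q2 else
      if (n+1-1) % 4 = 2 then (α + p2)/q1 else α + ↑x₀) = (α + p2)/q2
    simp only [Nat.add_sub_cancel, h]
    norm_num
  have hv2 : ∀ n : ℕ, n % 4 = 2 → t (n+1) = (α + p2)/q1 := by
    intro n h
    show (if n+1 = 0 then α else if (n+1-1) % 4 = 0 then (α + ↑x₀)/q1 else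
      if (n+1-1) % 4 = 1 then (α + p2)/q2 else
      if (n+1-1) % 4 = 2 then (α + p2)/q1 else α + ↑x₀) = (α + p2)/q1
    simp only [Nat.add_sub_cancel, h]
    norm_num
  have hv3 : ∀ n : ℕ, n % 4 = 3 → t (n+1) = α + ↑x₀ := by
    intro n h
    show (if n+1 = 0 then α else if (n+1-1) % 4 = 0 then (α + ↑x₀)/q1 else
      if (n+1-1) % 4 = 1 then (α + p2)/q2 else
      if (n+1-1) % 4 = 2 then (α + p2)/q1 else α + ↑x₀) = α + ↑x₀
    simp only [Nat.add_sub_cancel, h]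
    norm_num
  have hx01 : (1:ℝ) ≤ (x₀:ℝ) := by exact_mod_cast h0
  have hT : ∀ n, 1 ≤ t (n+1) := by
    intro n
    have hc : n % 4 = 0 ∨ n % 4 = 1 ∨ n % 4 = 2 ∨ n % 4 = 3 := by omega
    rcases hc with h | h | h | h
    · rw [hv0 n h, le_div_iff₀ hq1pos]; linarith [g8]
    · rw [hv1 n h, le_div_iff₀ hq2pos]; linarith [g9]
    · rw [hv2 n h, le_div_iff₀ hq1pos]; linarith [g10]
    · rw [hv3 n h]; linarith [hαpos]
  have hav0 : ∀ n : ℕ, n % 4 = 0 → a (n+1) = x₁ := by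
    intro n h; rw [haval, h]; rfl
  have hav1 : ∀ n : ℕ, n % 4 = 1 → a (n+1) = x₂ := by
    intro n h; rw [haval, h]; rfl
  have hav2 : ∀ n : ℕ, n % 4 = 2 → a (n+1) = x₁ := by
    intro n h; rw [haval, h]; rfl
  have hav3 : ∀ n : ℕ, n % 4 = 3 → a (n+1) = 2*x₀ := by
    intro n h; rw [haval, h]; rfl
  have ht0 : t 0 = α := by rw [ht]; rfl
  have ha0 : a 0 = x₀ := by rw [ha]; rfl
  have hrec : ∀ n, t n = a n + (t (n+1))⁻¹ := by
    intro n
    match n with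
    | 0 =>
        rw [ht0, hv0 0 rfl, ha0]
        have := surd_step α 0 1 (x₀:ℝ) (x₀:ℝ) q1 one_pos hq1pos (by linarith)
          (by ring) (by rw [← hQ1D]; try ring)
        simpa using this
    | (n+1) =>
        have hc : n % 4 = 0 ∨ n % 4 = 1 ∨ n % 4 = 2 ∨ n % 4 = 3 := by omega
        rcases hc with h | h | h | h
        · have h' : (n+1) % 4 = 1 := by omega
          rw [hv0 n h, hv1 (n+1) h', hav0 n h]
          exact surd_step α (x₀:ℝ) q1 (x₁:ℝ) p2 q2 hq1pos hq2pos (by linarith)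
            (by rw [hp2def]; try ring) (by rw [← hQQ12]; try ring)
        · have h' : (n+1) % 4 = 2 := by omega
          rw [hv1 n h, hv2 (n+1) h', hav1 n h]
          exact surd_step α p2 q2 (x₂:ℝ) p2 q1 hq2pos hq1pos (by linarith)
            (by linarith [h2p2]) (by rw [← hQQ12]; try ring)
        · have h' : (n+1) % 4 = 3 := by omega
          rw [hv2 n h, hv3 (n+1) h', hav2 n h]
          have := surd_step α p2 q1 (x₁:ℝ) (x₀:ℝ) 1 hq1pos one_pos (by linarith)
            (by rw [hp2def]; try ring) (by rw [← hQ1D]; try ring)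
          rw [div_one] at this
          exact this
        · have h' : (n+1) % 4 = 0 := by omega
          rw [hv3 n h, hv0 (n+1) h', hav3 n h]
          have := surd_step α (x₀:ℝ) 1 ((2*x₀ : ℕ):ℝ) (x₀:ℝ) q1 one_pos hq1pos (by linarith)
            (by push_cast; try ring) (by rw [← hQ1D]; try ring)
          rw [div_one] at this
          exact this
  have main := cfValue_of_tails a t hA hT hrec
  rw [ht0] at main
  exact main
end
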